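/- arXiv:2211.10842 — 4 statements merged into one kernel-verified Lean document; each statement's English description precedes it below -/
import Mathlib

section
/- Let A = (A₁ →^0 A₀, m², m³) be a skeletal 2-term strongly homotopy associative conformal algebra. Then (A₀, m²) is an associative conformal algebra, m² makes A₁ an A₀-bimodule, and m³ is a 3-cocycle in the Hochschild complex of A₀ with coefficients in A₁, i.e., d₃(m³) = 0. -/
structure AssocConformalAlg (k : Type*) [Field k] (A : Type*) [AddCommGroup A] [Module k A] where
  D : A →ₗ[k] A
  mul : k → A →ₗ[k] A →ₗ[k] A
  conf_left : ∀ (l : k) (a b : A), mul l (D a) b = -(l • mul l a b)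
  conf_right : ∀ (l : k) (a b : A), mul l a (D b) = D (mul l a b) + l • mul l a b
  assoc : ∀ (l m : k) (a b c : A), mul (l + m) (mul l a b) c = mul l a (mul m b c)

structure ConfBimodule {k : Type*} [Field k] {A : Type*} [AddCommGroup A] [Module k A]
    (S : AssocConformalAlg k A) (M : Type*) [AddCommGroup M] [Module k M] where
  DM : M →ₗ[k] M
  lact : k → A →ₗ[k] M →ₗ[k] M
  ract : k → M →ₗ[k] A →ₗ[k] M
  lact_D : ∀ (l : k) (a : A) (v : M), lact l (S.D a) v = -(l • lact l a v)
  lact_DM : ∀ (l : k) (a : A) (v : M), lact l a (DM v) = DM (lact l a v) + l • lact l a v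
  lact_mul : ∀ (l m : k) (a b : A) (v : M),
      lact (l + m) (S.mul l a b) v = lact l a (lact m b v)
  ract_DM : ∀ (l : k) (v : M) (a : A), ract l (DM v) a = -(l • ract l v a)
  ract_D : ∀ (l : k) (v : M) (a : A), ract l v (S.D a) = DM (ract l v a) + l • ract l v a
  ract_mul : ∀ (l m : k) (v : M) (a b : A),
      ract (l + m) (ract l v a) b = ract l v (S.mul m a b)
  compat : ∀ (l m : k) (a : A) (v : M) (b : A),
      ract (l + m) (lact l a v) b = lact l a (ract m v b)

structure TwoTermSHAC (k : Type*) [Field k] (A0 A1 : Type*)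
    [AddCommGroup A0] [Module k A0] [AddCommGroup A1] [Module k A1] where
  D0 : A0 →ₗ[k] A0
  D1 : A1 →ₗ[k] A1
  d : A1 →ₗ[k] A0
  d_comm : ∀ b, d (D1 b) = D0 (d b)
  m00 : k → A0 →ₗ[k] A0 →ₗ[k] A0
  m01 : k → A0 →ₗ[k] A1 →ₗ[k] A1
  m10 : k → A1 →ₗ[k] A0 →ₗ[k] A1
  m3 : k → k → A0 →ₗ[k] A0 →ₗ[k] A0 →ₗ[k] A1
  m00_D_left : ∀ l a b, m00 l (D0 a) b = -(l • m00 l a b)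
  m00_D_right : ∀ l a b, m00 l a (D0 b) = D0 (m00 l a b) + l • m00 l a b
  m01_D_left : ∀ l a b, m01 l (D0 a) b = -(l • m01 l a b)
  m01_D_right : ∀ l a b, m01 l a (D1 b) = D1 (m01 l a b) + l • m01 l a b
  m10_D_left : ∀ l b a, m10 l (D1 b) a = -(l • m10 l b a)
  m10_D_right : ∀ l b a, m10 l b (D0 a) = D1 (m10 l b a) + l • m10 l b a
  m3_D1 : ∀ l1 l2 a b c, m3 l1 l2 (D0 a) b c = -(l1 • m3 l1 l2 a b c)
  m3_D2 : ∀ l1 l2 a b c, m3 l1 l2 a (D0 b) c = -(l2 • m3 l1 l2 a b c)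
  m3_D3 : ∀ l1 l2 a b c, m3 l1 l2 a b (D0 c) = D1 (m3 l1 l2 a b c) + (l1 + l2) • m3 l1 l2 a b c
  eq1 : ∀ l a b, d (m01 l a b) = m00 l a (d b)
  eq2 : ∀ l b a, d (m10 l b a) = m00 l (d b) a
  eq3 : ∀ l b1 b2, m01 l (d b1) b2 = m10 l b1 (d b2)
  eq4 : ∀ l1 l2 a1 a2 a3, d (m3 l1 l2 a1 a2 a3)
      = m00 (l1 + l2) (m00 l1 a1 a2) a3 - m00 l1 a1 (m00 l2 a2 a3)
  eq5 : ∀ l1 l2 b a2 a3, m3 l1 l2 (d b) a2 a3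
      = m10 (l1 + l2) (m10 l1 b a2) a3 - m10 l1 b (m00 l2 a2 a3)
  eq6 : ∀ l1 l2 a1 b a3, m3 l1 l2 a1 (d b) a3
      = m10 (l1 + l2) (m01 l1 a1 b) a3 - m01 l1 a1 (m10 l2 b a3)
  eq7 : ∀ l1 l2 a1 a2 b, m3 l1 l2 a1 a2 (d b)
      = m01 (l1 + l2) (m00 l1 a1 a2) b - m01 l1 a1 (m01 l2 a2 b)
  eq8 : ∀ l1 l2 l3 a1 a2 a3 a4,
      m10 (l1 + l2 + l3) (m3 l1 l2 a1 a2 a3) a4 + m01 l1 a1 (m3 l2 l3 a2 a3 a4)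
      = m3 (l1 + l2) l3 (m00 l1 a1 a2) a3 a4 - m3 l1 (l2 + l3) a1 (m00 l2 a2 a3) a4
        + m3 l1 l2 a1 a2 (m00 l3 a3 a4)

/-- A skeletal 2-term SHAC-algebra gives an associative conformal algebra `A₀`, an
`A₀`-bimodule structure on `A₁`, and `m³` is a Hochschild 3-cocycle of `A₀` with
coefficients in `A₁`. -/
theorem stmt_5 (k : Type*) [Field k] [IsAlgClosed k] [CharZero k]
    (A0 A1 : Type*) [AddCommGroup A0] [Module k A0] [AddCommGroup A1] [Module k A1]
    (S : TwoTermSHAC k A0 A1) (hsk : S.d = 0) :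
    ∃ T : AssocConformalAlg k A0,
      T.D = S.D0 ∧ (∀ l a b, T.mul l a b = S.m00 l a b) ∧
      ∃ Mb : ConfBimodule T A1,
        Mb.DM = S.D1 ∧ (∀ l a v, Mb.lact l a v = S.m01 l a v) ∧
        (∀ l v a, Mb.ract l v a = S.m10 l v a) ∧
        (∀ (l1 l2 l3 : k) (a1 a2 a3 a4 : A0),
          S.m01 l1 a1 (S.m3 l2 l3 a2 a3 a4)
            - S.m3 (l1 + l2) l3 (S.m00 l1 a1 a2) a3 a4
            + S.m3 l1 (l2 + l3) a1 (S.m00 l2 a2 a3) a4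
            - S.m3 l1 l2 a1 a2 (S.m00 l3 a3 a4)
            + S.m10 (l1 + l2 + l3) (S.m3 l1 l2 a1 a2 a3) a4 = 0) := by
  have hd : ∀ b : A1, S.d b = 0 := fun b => by rw [hsk]; rfl
  have hassoc : ∀ (l m : k) (a b c : A0),
      S.m00 (l + m) (S.m00 l a b) c = S.m00 l a (S.m00 m b c) := by
    intro l m a b c
    have h := S.eq4 l m a b c
    have : (S.m3 l m a b c : A1) = S.m3 l m a b c := rfl
    have h0 : S.d (S.m3 l m a b c) = 0 := hd _
    rw [h0] at h
    linear_combination (norm := abel) -h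
  refine ⟨⟨S.D0, S.m00, S.m00_D_left, S.m00_D_right, hassoc⟩, rfl, fun _ _ _ => rfl, ?_⟩
  have hlm : ∀ (l m : k) (a b : A0) (v : A1),
      S.m01 (l + m) (S.m00 l a b) v = S.m01 l a (S.m01 m b v) := by
    intro l m a b v
    have h := S.eq7 l m a b v
    rw [hd v, map_zero] at h
    linear_combination (norm := abel) -h
  have hrm : ∀ (l m : k) (v : A1) (a b : A0),
      S.m10 (l + m) (S.m10 l v a) b = S.m10 l v (S.m00 m a b) := by
    intro l m v a b
    have h := S.eq5 l m v a b
    rw [hd v, map_zero] at h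
    simp only [LinearMap.zero_apply] at h
    linear_combination (norm := abel) -h
  have hc : ∀ (l m : k) (a : A0) (v : A1) (b : A0),
      S.m10 (l + m) (S.m01 l a v) b = S.m01 l a (S.m10 m v b) := by
    intro l m a v b
    have h := S.eq6 l m a v b
    rw [hd v, map_zero] at h
    simp only [map_zero, LinearMap.zero_apply] at h
    linear_combination (norm := abel) -h
  refine ⟨⟨S.D1, S.m01, S.m10, S.m01_D_left, S.m01_D_right, hlm,
    S.m10_D_left, S.m10_D_right, hrm, hc⟩, rfl, fun _ _ _ => rfl, fun _ _ _ => rfl, ?_⟩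
  intro l1 l2 l3 a1 a2 a3 a4
  have h := S.eq8 l1 l2 l3 a1 a2 a3 a4
  linear_combination (norm := abel) h
end

section
/- Let A, B be associative conformal algebras and (▶, ◀, χ) a non-abelian 2-cocycle on B with values in A. Then the λ-product on the k[∂]-module A ⊕ B given by (a₁,b₁) λ (a₂,b₂) = (a₁ λ a₂ + b₁ ▶λ a₂ + a₁ ◀λ b₂ + χ_λ(b₁,b₂), b₁ λ b₂) defines an associative conformal algebra structure. -/
set_option maxHeartbeats 2000000


structure IsNonAbel2Cocycle {k : Type*} [Field k] {A B : Type*}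
    [AddCommGroup A] [Module k A] [AddCommGroup B] [Module k B]
    (SA : AssocConformalAlg k A) (SB : AssocConformalAlg k B)
    (lact : k → B →ₗ[k] A →ₗ[k] A) (ract : k → A →ₗ[k] B →ₗ[k] A)
    (chi : k → B →ₗ[k] B →ₗ[k] A) : Prop where
  lact_DB : ∀ l b a, lact l (SB.D b) a = -(l • lact l b a)
  lact_DA : ∀ l b a, lact l b (SA.D a) = SA.D (lact l b a) + l • lact l b a
  ract_DA : ∀ l a b, ract l (SA.D a) b = -(l • ract l a b)
  ract_DB : ∀ l a b, ract l a (SB.D b) = SA.D (ract l a b) + l • ract l a b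
  chi_DB1 : ∀ l b1 b2, chi l (SB.D b1) b2 = -(l • chi l b1 b2)
  chi_DB2 : ∀ l b1 b2, chi l b1 (SB.D b2) = SA.D (chi l b1 b2) + l • chi l b1 b2
  coh1 : ∀ l m b1 b2 a, lact l b1 (lact m b2 a)
      = lact (l + m) (SB.mul l b1 b2) a + SA.mul (l + m) (chi l b1 b2) a
  coh2 : ∀ l m a b1 b2, ract (l + m) (ract l a b1) b2
      = ract l a (SB.mul m b1 b2) + SA.mul l a (chi m b1 b2)
  coh3 : ∀ l m b1 a b2, lact l b1 (ract m a b2) = ract (l + m) (lact l b1 a) b2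
  coh4 : ∀ l m a1 a2 b, ract (l + m) (SA.mul l a1 a2) b = SA.mul l a1 (ract m a2 b)
  coh4' : ∀ l m b a1 a2, lact l b (SA.mul m a1 a2) = SA.mul (l + m) (lact l b a1) a2
  coh4'' : ∀ l m a1 b a2, SA.mul (l + m) (ract l a1 b) a2 = SA.mul l a1 (lact m b a2)
  coh5 : ∀ l m b1 b2 b3, lact l b1 (chi m b2 b3) + chi (l + m) b1 (SB.mul m b2 b3)
      = chi (l + m) (SB.mul l b1 b2) b3 + ract (l + m) (chi l b1 b2) b3

/-- A non-abelian 2-cocycle on `B` with values in `A` defines an associative conformal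
algebra structure on `A ⊕ B`. -/
theorem stmt_10 (k : Type*) [Field k] [IsAlgClosed k] [CharZero k]
    (A B : Type*) [AddCommGroup A] [Module k A] [AddCommGroup B] [Module k B]
    (SA : AssocConformalAlg k A) (SB : AssocConformalAlg k B)
    (lact : k → B →ₗ[k] A →ₗ[k] A) (ract : k → A →ₗ[k] B →ₗ[k] A)
    (chi : k → B →ₗ[k] B →ₗ[k] A)
    (hc : IsNonAbel2Cocycle SA SB lact ract chi) :
    ∃ S : AssocConformalAlg k (A × B),
      (∀ p : A × B, S.D p = (SA.D p.1, SB.D p.2)) ∧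
      (∀ (l : k) (p q : A × B),
        S.mul l p q
          = (SA.mul l p.1 q.1 + lact l p.2 q.1 + ract l p.1 q.2 + chi l p.2 q.2,
             SB.mul l p.2 q.2)) := by
  classical
  obtain ⟨lDB, lDA, rDA, rDB, cDB1, cDB2, c1, c2, c3, c4, c4', c4'', c5⟩ := hc
  have key : ∀ (l m : k) (b1 b2 b3 : B),
      m • chi (l + m) b1 (SB.mul m b2 b3) = 0 := by
    intro l m b1 b2 b3
    have h5 := c5 l m b1 b2 b3
    have h5' := c5 l m b1 b2 (SB.D b3)
    simp only [cDB2, SB.conf_right, rDB, lDA, map_add, map_smul] at h5'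
    have hD : SA.D (lact l b1 (chi m b2 b3)) + SA.D (chi (l + m) b1 (SB.mul m b2 b3))
        = SA.D (chi (l + m) (SB.mul l b1 b2) b3)
          + SA.D (ract (l + m) (chi l b1 b2) b3) := by
      rw [← map_add, ← map_add, h5]
    linear_combination (norm := module) h5' - hD - (l + m) • h5
  have chi0 : ∀ (s m : k) (b1 b2 b3 : B), m ≠ 0 → chi s b1 (SB.mul m b2 b3) = 0 := by
    intro s m b1 b2 b3 hm
    have h := key (s - m) m b1 b2 b3
    have hs : s - m + m = s := by ring
    rw [hs] at h
    exact (smul_eq_zero.mp h).resolve_left hm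
  have hshift : ∀ (l m : k) (b1 b2 b3 : B),
      chi (l + m) b1 (SB.mul m b2 b3) = chi l b1 (SB.mul m b2 b3) := by
    intro l m b1 b2 b3
    rcases eq_or_ne m 0 with hm | hm
    · subst hm; rw [add_zero]
    · rw [chi0 _ _ _ _ _ hm, chi0 _ _ _ _ _ hm]
  refine ⟨{
    D := (SA.D.prodMap SB.D)
    mul := fun l => {
      toFun := fun p => {
        toFun := fun q =>
          (SA.mul l p.1 q.1 + lact l p.2 q.1 + ract l p.1 q.2 + chi l p.2 q.2,
           SB.mul l p.2 q.2)
        map_add' := by intro q r; simp [Prod.ext_iff]; abel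
        map_smul' := by intro c q; simp [Prod.ext_iff, smul_add] }
      map_add' := by
        intro p r
        ext q <;> simp [Prod.ext_iff] <;> abel
      map_smul' := by
        intro c p
        ext q <;> simp [Prod.ext_iff, smul_add] }
    conf_left := by
      intro l a b
      simp only [LinearMap.coe_mk, AddHom.coe_mk, LinearMap.prodMap_apply, Prod.smul_mk]
      refine Prod.ext ?_ ?_
      · simp [SA.conf_left, lDB, rDA, cDB1, smul_add]
        abel
      · simp [SB.conf_left]
    conf_right := by
      intro l a b
      simp only [LinearMap.coe_mk, AddHom.coe_mk, LinearMap.prodMap_apply, Prod.smul_mk]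
      refine Prod.ext ?_ ?_
      · simp [SA.conf_right, lDA, rDB, cDB2, smul_add]
        abel
      · simp [SB.conf_right]
    assoc := by
      intro l m a b c
      simp only [LinearMap.coe_mk, AddHom.coe_mk]
      refine Prod.ext ?_ ?_
      · simp only [map_add, LinearMap.add_apply]
        have e5 := c5 l m a.2 b.2 c.2
        rw [hshift l m] at e5
        have : chi (l + m) (SB.mul l a.2 b.2) c.2
            = lact l a.2 (chi m b.2 c.2) + chi l a.2 (SB.mul m b.2 c.2)
              - ract (l + m) (chi l a.2 b.2) c.2 := by
          rw [e5]; abel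
        rw [SA.assoc, c1, c2, c3, c4, c4', c4'', this]
        abel
      · simp [SB.assoc] }, ?_, ?_⟩
  · intro p; rfl
  · intro l p q; rfl
end

section
/- Two non-abelian 2-cocycles (▶, ◀, χ) and (▶̄, ◀̄, χ̄) on B with values in A are equivalent if and only if the corresponding extensions 0 → A → A ⊕_{(▶,◀,χ)} B → B → 0 and 0 → A → A ⊕_{(▶̄,◀̄,χ̄)} B → B → 0 are equivalent extensions; moreover when δ: B → A witnesses the cocycle equivalence, θ(a,b) = (a − δ(b), b) is the corresponding isomorphism of associative conformal algebras. -/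
def CocycleEquivVia {k : Type*} [Field k] {A B : Type*}
    [AddCommGroup A] [Module k A] [AddCommGroup B] [Module k B]
    (SA : AssocConformalAlg k A) (SB : AssocConformalAlg k B)
    (lact : k → B → A → A) (ract : k → A → B → A) (chi : k → B → B → A)
    (lact' : k → B → A → A) (ract' : k → A → B → A) (chi' : k → B → B → A)
    (δ : B →ₗ[k] A) : Prop :=
  (∀ b, δ (SB.D b) = SA.D (δ b)) ∧
  (∀ l b a, lact' l b a - lact l b a = SA.mul l (δ b) a) ∧
  (∀ l a b, ract' l a b - ract l a b = SA.mul l a (δ b)) ∧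
  (∀ l b1 b2, chi' l b1 b2 - chi l b1 b2
    = lact' l b1 (δ b2) - δ (SB.mul l b1 b2) + ract' l (δ b1) b2 - SA.mul l (δ b1) (δ b2))

/-- Two non-abelian 2-cocycles are equivalent iff the corresponding extensions
`A ⊕_{(▶,◀,χ)} B` are equivalent; the isomorphism corresponding to `δ` is
`θ(a,b) = (a - δ(b), b)`. -/
theorem stmt_11 (k : Type*) [Field k] [IsAlgClosed k] [CharZero k]
    (A B : Type*) [AddCommGroup A] [Module k A] [AddCommGroup B] [Module k B]
    (SA : AssocConformalAlg k A) (SB : AssocConformalAlg k B)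
    (lact : k → B →ₗ[k] A →ₗ[k] A) (ract : k → A →ₗ[k] B →ₗ[k] A)
    (chi : k → B →ₗ[k] B →ₗ[k] A)
    (lact' : k → B →ₗ[k] A →ₗ[k] A) (ract' : k → A →ₗ[k] B →ₗ[k] A)
    (chi' : k → B →ₗ[k] B →ₗ[k] A)
    (hc : IsNonAbel2Cocycle SA SB lact ract chi)
    (hc' : IsNonAbel2Cocycle SA SB lact' ract' chi')
    (S S' : AssocConformalAlg k (A × B))
    (hSD : ∀ p : A × B, S.D p = (SA.D p.1, SB.D p.2))
    (hSm : ∀ (l : k) (p q : A × B),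
      S.mul l p q = (SA.mul l p.1 q.1 + lact l p.2 q.1 + ract l p.1 q.2 + chi l p.2 q.2,
        SB.mul l p.2 q.2))
    (hS'D : ∀ p : A × B, S'.D p = (SA.D p.1, SB.D p.2))
    (hS'm : ∀ (l : k) (p q : A × B),
      S'.mul l p q = (SA.mul l p.1 q.1 + lact' l p.2 q.1 + ract' l p.1 q.2
          + chi' l p.2 q.2, SB.mul l p.2 q.2)) :
    ((∃ δ : B →ₗ[k] A,
        CocycleEquivVia SA SB (fun l b a => lact l b a) (fun l a b => ract l a b)
          (fun l b1 b2 => chi l b1 b2) (fun l b a => lact' l b a)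
          (fun l a b => ract' l a b) (fun l b1 b2 => chi' l b1 b2) δ) ↔
      (∃ θ : (A × B) →ₗ[k] (A × B),
        (∀ p, θ (S.D p) = S'.D (θ p)) ∧
        (∀ l p q, θ (S.mul l p q) = S'.mul l (θ p) (θ q)) ∧
        (∀ a : A, θ (a, (0 : B)) = (a, (0 : B))) ∧
        (∀ p : A × B, (θ p).2 = p.2))) ∧
    (∀ δ : B →ₗ[k] A,
      CocycleEquivVia SA SB (fun l b a => lact l b a) (fun l a b => ract l a b)
        (fun l b1 b2 => chi l b1 b2) (fun l b a => lact' l b a)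
        (fun l a b => ract' l a b) (fun l b1 b2 => chi' l b1 b2) δ →
      ∀ (l : k) (p q : A × B),
        ((S.mul l p q).1 - δ (S.mul l p q).2, (S.mul l p q).2)
          = S'.mul l (p.1 - δ p.2, p.2) (q.1 - δ q.2, q.2)) := by
  -- key computation
  have key : ∀ δ : B →ₗ[k] A,
      CocycleEquivVia SA SB (fun l b a => lact l b a) (fun l a b => ract l a b)
        (fun l b1 b2 => chi l b1 b2) (fun l b a => lact' l b a)
        (fun l a b => ract' l a b) (fun l b1 b2 => chi' l b1 b2) δ →
      ∀ (l : k) (p q : A × B),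
        ((S.mul l p q).1 - δ (S.mul l p q).2, (S.mul l p q).2)
          = S'.mul l (p.1 - δ p.2, p.2) (q.1 - δ q.2, q.2) := by
    intro δ hδ l p q
    obtain ⟨h0, h1, h2, h3⟩ := hδ
    simp only [] at h1 h2 h3
    have e1 : ∀ (l : k) b a, lact' l b a = lact l b a + SA.mul l (δ b) a := by
      intro l b a; have := h1 l b a; rw [sub_eq_iff_eq_add] at this; rw [this]; abel
    have e2 : ∀ (l : k) a b, ract' l a b = ract l a b + SA.mul l a (δ b) := by
      intro l a b; have := h2 l a b; rw [sub_eq_iff_eq_add] at this; rw [this]; abel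
    have e3 : ∀ (l : k) b1 b2, chi' l b1 b2 = chi l b1 b2 +
        (lact' l b1 (δ b2) - δ (SB.mul l b1 b2) + ract' l (δ b1) b2
          - SA.mul l (δ b1) (δ b2)) := by
      intro l b1 b2; have := h3 l b1 b2; rw [sub_eq_iff_eq_add] at this; rw [this]; abel
    rw [hSm, hS'm]
    refine Prod.ext ?_ rfl
    simp only [map_sub, LinearMap.sub_apply, map_add, e3, e1, e2]
    abel
  constructor
  · constructor
    · rintro ⟨δ, hδ⟩
      refine ⟨LinearMap.prod ((LinearMap.fst k A B) - δ.comp (LinearMap.snd k A B))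
        (LinearMap.snd k A B), ?_, ?_, ?_, ?_⟩
      · intro p
        simp only [LinearMap.prod_apply, Function.prod, LinearMap.sub_apply,
          LinearMap.fst_apply, LinearMap.coe_comp, Function.comp_apply,
          LinearMap.snd_apply, hSD, hS'D, map_sub, hδ.1 p.2]
      · intro l p q
        have := key δ hδ l p q
        simpa only [LinearMap.prod_apply, Function.prod, LinearMap.sub_apply,
          LinearMap.fst_apply, LinearMap.coe_comp, Function.comp_apply,
          LinearMap.snd_apply] using this
      · intro a
        simp
      · intro p
        simp
    · rintro ⟨θ, hD, hm, ha, h2c⟩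
      set δ : B →ₗ[k] A := -((LinearMap.fst k A B).comp (θ.comp (LinearMap.inr k A B)))
        with hδdef
      have hθ0 : ∀ b : B, θ (0, b) = (-δ b, b) := by
        intro b
        refine Prod.ext ?_ (h2c (0, b))
        simp [hδdef]
      have hθ : ∀ (x : A) (y : B), θ (x, y) = (x - δ y, y) := by
        intro x y
        have hxy : ((x, y) : A × B) = (x, 0) + (0, y) := by simp
        rw [hxy, map_add, ha, hθ0]
        exact Prod.ext (by simp [sub_eq_add_neg]) (by simp)
      refine ⟨δ, ?_, ?_, ?_, ?_⟩
      · intro b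
        have h := hD ((0 : A), b)
        rw [hSD, hS'D] at h
        simp only [hθ0, map_zero] at h
        have h1 := congrArg Prod.fst h
        simp only [map_neg] at h1
        exact neg_injective h1
      · intro l b a
        have h := hm l ((0 : A), b) (a, (0 : B))
        rw [hSm, hS'm] at h
        simp only [hθ0, ha, map_zero, map_neg, LinearMap.zero_apply, LinearMap.neg_apply,
          add_zero, zero_add, neg_zero] at h
        have h1 := congrArg Prod.fst h
        simp only at h1
        simp only []
        rw [h1]; abel
      · intro l a b
        have h := hm l (a, (0 : B)) ((0 : A), b)
        rw [hSm, hS'm] at h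
        simp only [hθ0, ha, map_zero, map_neg, LinearMap.zero_apply, LinearMap.neg_apply,
          add_zero, zero_add, neg_zero] at h
        have h1 := congrArg Prod.fst h
        simp only at h1
        simp only []
        rw [h1]; abel
      · intro l b1 b2
        have h := hm l ((0 : A), b1) ((0 : A), b2)
        rw [hSm, hS'm] at h
        simp only [hθ, hθ0, map_zero, map_neg, LinearMap.zero_apply, LinearMap.neg_apply,
          add_zero, zero_add, neg_zero, neg_neg, zero_sub] at h
        have h1 := congrArg Prod.fst h
        simp only [] at h1
        simp only []
        rw [sub_eq_iff_eq_add] at h1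
        rw [h1]
        abel
  · exact key
end

section
/- Let 0 → A → E →^β B → 0 be a non-abelian extension of associative conformal algebras. There is an exact sequence of groups 1 → Aut_A^{id}(E) → Aut_A(E) →^κ Aut(A) × Aut(B) →^W H²_{nab}(B,A), where κ(f) = (f|_A, β∘f∘γ), Aut_A^{id}(E) = ker κ, and W is the Wells map W(g,h) = [(▶^{g,h}, ◀^{g,h}, χ^{g,h}) − (▶,◀,χ)]; exactness means ker κ = Aut_A^{id}(E) and Im κ = {(g,h) | W(g,h) = 0}. -/
/-- An automorphism of an associative conformal algebra: a `k[∂]`-module automorphism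
preserving the λ-product. -/
def IsConfAut {k : Type*} [Field k] {E : Type*} [AddCommGroup E] [Module k E]
    (S : AssocConformalAlg k E) (f : E ≃ₗ[k] E) : Prop :=
  (∀ x, f (S.D x) = S.D (f x)) ∧ ∀ (l : k) (x y : E), f (S.mul l x y) = S.mul l (f x) (f y)

/-- The fundamental exact sequence of Wells:
`1 → Aut_A^{id}(E) → Aut_A(E) →^κ Aut(A) × Aut(B) →^W H²_{nab}(B,A)`.
The map `κ` is a group homomorphism and its image is exactly the kernel of the Wells
map `W(g,h) = [(▶^{g,h},◀^{g,h},χ^{g,h}) - (▶,◀,χ)]`. -/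
theorem stmt_17 (k : Type*) [Field k] [IsAlgClosed k] [CharZero k]
    (A B : Type*) [AddCommGroup A] [Module k A] [AddCommGroup B] [Module k B]
    (SA : AssocConformalAlg k A) (SB : AssocConformalAlg k B)
    (lact : k → B →ₗ[k] A →ₗ[k] A) (ract : k → A →ₗ[k] B →ₗ[k] A)
    (chi : k → B →ₗ[k] B →ₗ[k] A)
    (hc : IsNonAbel2Cocycle SA SB lact ract chi)
    (S : AssocConformalAlg k (A × B))
    (hSD : ∀ p : A × B, S.D p = (SA.D p.1, SB.D p.2))
    (hSm : ∀ (l : k) (p q : A × B),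
      S.mul l p q = (SA.mul l p.1 q.1 + lact l p.2 q.1 + ract l p.1 q.2 + chi l p.2 q.2,
        SB.mul l p.2 q.2)) :
    (∀ (g : A ≃ₗ[k] A) (h : B ≃ₗ[k] B), IsConfAut SA g → IsConfAut SB h →
      ((∃ f : (A × B) ≃ₗ[k] (A × B), IsConfAut S f ∧
          (∀ a : A, f (a, (0 : B)) = (g a, (0 : B))) ∧
          (∀ b : B, (f ((0 : A), b)).2 = h b)) ↔
        (∃ δ : B →ₗ[k] A,
          CocycleEquivVia SA SB (fun l b a => lact l b a) (fun l a b => ract l a b)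
            (fun l b1 b2 => chi l b1 b2)
            (fun l b a => g (lact l (h.symm b) (g.symm a)))
            (fun l a b => g (ract l (g.symm a) (h.symm b)))
            (fun l b1 b2 => g (chi l (h.symm b1) (h.symm b2))) δ))) ∧
    (∀ (f f' : (A × B) ≃ₗ[k] (A × B)) (g g' : A ≃ₗ[k] A) (h h' : B ≃ₗ[k] B),
      IsConfAut S f → IsConfAut S f' →
      (∀ a : A, f (a, (0 : B)) = (g a, (0 : B))) → (∀ b : B, (f ((0 : A), b)).2 = h b) →
      (∀ a : A, f' (a, (0 : B)) = (g' a, (0 : B))) →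
      (∀ b : B, (f' ((0 : A), b)).2 = h' b) →
      (IsConfAut S (f.trans f') ∧
       (∀ a : A, (f.trans f') (a, (0 : B)) = ((g.trans g') a, (0 : B))) ∧
       (∀ b : B, ((f.trans f') ((0 : A), b)).2 = (h.trans h') b))) := by
  constructor
  · intro g h hg hh
    have hsymmDB : ∀ b, h.symm (SB.D b) = SB.D (h.symm b) := by
      intro b
      apply h.injective
      rw [hh.1, h.apply_symm_apply, h.apply_symm_apply]
    have hsymmMul : ∀ (l : k) b1 b2,
        h.symm (SB.mul l b1 b2) = SB.mul l (h.symm b1) (h.symm b2) := by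
      intro l b1 b2
      apply h.injective
      rw [hh.2, h.apply_symm_apply, h.apply_symm_apply, h.apply_symm_apply]
    constructor
    · rintro ⟨f, ⟨hfD, hfmul⟩, hfA, hfB⟩
      refine ⟨(LinearMap.fst k A B) ∘ₗ f.toLinearMap ∘ₗ (LinearMap.inr k A B) ∘ₗ
          h.symm.toLinearMap, ?_⟩
      set δ : B →ₗ[k] A := (LinearMap.fst k A B) ∘ₗ f.toLinearMap ∘ₗ (LinearMap.inr k A B) ∘ₗ
          h.symm.toLinearMap with hδdef
      have hδ : ∀ b, δ b = (f (0, h.symm b)).1 := fun b => rfl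
      have hf0 : ∀ b, f (0, b) = (δ (h b), h b) := by
        intro b
        have h2 : δ (h b) = (f (0, b)).1 := by rw [hδ, h.symm_apply_apply]
        exact Prod.ext h2.symm (hfB b)
      have hfgen : ∀ x y, f (x, y) = (g x + δ (h y), h y) := by
        intro x y
        have hxy : ((x, y) : A × B) = ((x, 0) + ((0 : A), y) : A × B) := by simp
        rw [hxy, map_add, hfA, hf0]
        simp
      have cond1 : ∀ b, δ (SB.D b) = SA.D (δ b) := by
        intro b
        have := hfD (0, h.symm b)
        rw [hSD, hSD] at this
        simp only [map_zero] at this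
        rw [hfgen, hfgen] at this
        simp only [map_zero, add_zero, zero_add, h.apply_symm_apply] at this
        rw [hh.1, h.apply_symm_apply] at this
        exact (Prod.ext_iff.1 this).1
      have cond2 : ∀ (l : k) b a,
          g (lact l (h.symm b) (g.symm a)) - lact l b a = SA.mul l (δ b) a := by
        intro l b a
        have := hfmul l (0, h.symm b) (g.symm a, 0)
        rw [hSm, hSm] at this
        rw [hfgen, hfgen, hfgen] at this
        simp only [map_zero, LinearMap.zero_apply, LinearMap.map_zero, add_zero, zero_add,
          h.apply_symm_apply, g.apply_symm_apply, Prod.mk.injEq, and_true] at this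
        rw [this]; abel
      have cond3 : ∀ (l : k) a b,
          g (ract l (g.symm a) (h.symm b)) - ract l a b = SA.mul l a (δ b) := by
        intro l a b
        have := hfmul l (g.symm a, 0) (0, h.symm b)
        rw [hSm, hSm] at this
        rw [hfgen, hfgen, hfgen] at this
        simp only [map_zero, LinearMap.zero_apply, LinearMap.map_zero, add_zero, zero_add,
          h.apply_symm_apply, g.apply_symm_apply, Prod.mk.injEq, and_true] at this
        rw [this]; abel
      refine ⟨cond1, cond2, cond3, ?_⟩
      intro l b1 b2
      have := hfmul l (0, h.symm b1) (0, h.symm b2)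
      rw [hSm, hSm] at this
      rw [hfgen, hfgen, hfgen] at this
      simp only [map_zero, LinearMap.zero_apply, LinearMap.map_zero, add_zero, zero_add,
        h.apply_symm_apply, Prod.mk.injEq] at this
      have h1 := this.1
      rw [← hsymmMul, h.apply_symm_apply] at h1
      -- h1 : g (chi l (h.symm b1) (h.symm b2)) + δ (SB.mul l b1 b2)
      --      = SA.mul l (δ b1) (δ b2) + lact l b1 (δ b2) + ract l (δ b1) b2 + chi l b1 b2
      have e2 : g (lact l (h.symm b1) (g.symm (δ b2)))
          = SA.mul l (δ b1) (δ b2) + lact l b1 (δ b2) := by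
        have := cond2 l b1 (δ b2)
        rw [sub_eq_iff_eq_add] at this
        exact this
      have e3 : g (ract l (g.symm (δ b1)) (h.symm b2))
          = SA.mul l (δ b1) (δ b2) + ract l (δ b1) b2 := by
        have := cond3 l (δ b1) b2
        rw [sub_eq_iff_eq_add] at this
        exact this
      show g (chi l (h.symm b1) (h.symm b2)) - chi l b1 b2
          = g (lact l (h.symm b1) (g.symm (δ b2))) - δ (SB.mul l b1 b2)
            + g (ract l (g.symm (δ b1)) (h.symm b2)) - SA.mul l (δ b1) (δ b2)
      rw [e2, e3]
      rw [eq_sub_of_add_eq h1]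
      abel
    · rintro ⟨δ, hδ1, hδ2, hδ3, hδ4⟩
      simp only at hδ1 hδ2 hδ3 hδ4
      have e2 : ∀ (l : k) b x, g (lact l b x)
          = lact l (h b) (g x) + SA.mul l (δ (h b)) (g x) := by
        intro l b x
        have := hδ2 l (h b) (g x)
        rw [h.symm_apply_apply, g.symm_apply_apply, sub_eq_iff_eq_add] at this
        rw [this]; abel
      have e3 : ∀ (l : k) x b, g (ract l x b)
          = ract l (g x) (h b) + SA.mul l (g x) (δ (h b)) := by
        intro l x b
        have := hδ3 l (g x) (h b)
        rw [h.symm_apply_apply, g.symm_apply_apply, sub_eq_iff_eq_add] at this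
        rw [this]; abel
      have e4 : ∀ (l : k) b1 b2, g (chi l b1 b2)
          = chi l (h b1) (h b2) + lact l (h b1) (δ (h b2)) + ract l (δ (h b1)) (h b2)
            + SA.mul l (δ (h b1)) (δ (h b2)) - δ (SB.mul l (h b1) (h b2)) := by
        intro l b1 b2
        have h4 := hδ4 l (h b1) (h b2)
        rw [h.symm_apply_apply, h.symm_apply_apply, sub_eq_iff_eq_add] at h4
        have a2 : g (lact l b1 (g.symm (δ (h b2))))
            = lact l (h b1) (δ (h b2)) + SA.mul l (δ (h b1)) (δ (h b2)) := by
          rw [e2 l b1 (g.symm (δ (h b2))), g.apply_symm_apply]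
        have a3 : g (ract l (g.symm (δ (h b1))) b2)
            = ract l (δ (h b1)) (h b2) + SA.mul l (δ (h b1)) (δ (h b2)) := by
          rw [e3 l (g.symm (δ (h b1))) b2, g.apply_symm_apply]
        rw [a2, a3] at h4
        rw [h4]; abel
      refine ⟨LinearEquiv.ofLinear
        (LinearMap.prod
          ((g : A →ₗ[k] A) ∘ₗ LinearMap.fst k A B
            + δ ∘ₗ (h : B →ₗ[k] B) ∘ₗ LinearMap.snd k A B)
          ((h : B →ₗ[k] B) ∘ₗ LinearMap.snd k A B))
        (LinearMap.prod
          ((g.symm : A →ₗ[k] A) ∘ₗ (LinearMap.fst k A B - δ ∘ₗ LinearMap.snd k A B))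
          ((h.symm : B →ₗ[k] B) ∘ₗ LinearMap.snd k A B)) ?_ ?_, ?_, ?_, ?_⟩
      · apply LinearMap.ext
        rintro ⟨a, b⟩
        simp [LinearMap.prod_apply]
      · apply LinearMap.ext
        rintro ⟨a, b⟩
        simp [LinearMap.prod_apply]
      · constructor
        · rintro ⟨a, b⟩
          rw [hSD]
          simp only [LinearEquiv.ofLinear_apply, LinearMap.prod_apply, LinearMap.coe_comp,
            Function.comp_apply, LinearMap.fst_apply, LinearMap.snd_apply, LinearMap.add_apply,
            LinearEquiv.coe_coe, Function.prod]
          rw [hSD]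
          simp only [hg.1, hh.1, hδ1, map_add]
        · intro l p q
          obtain ⟨a1, b1⟩ := p
          obtain ⟨a2, b2⟩ := q
          rw [hSm]
          simp only [LinearEquiv.ofLinear_apply, LinearMap.prod_apply, LinearMap.coe_comp,
            Function.comp_apply, LinearMap.fst_apply, LinearMap.snd_apply, LinearMap.add_apply,
            LinearEquiv.coe_coe, Function.prod]
          rw [hSm]
          simp only [map_add, hg.2, hh.2, e2, e3, e4]
          refine Prod.ext ?_ rfl
          simp only [map_add, LinearMap.add_apply]
          abel
      · intro a
        simp [LinearMap.prod_apply]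
      · intro b
        simp [LinearMap.prod_apply]
  · intro f f' g g' h h' hf hf' hfA hfB hf'A hf'B
    refine ⟨⟨?_, ?_⟩, ?_, ?_⟩
    · intro x
      simp only [LinearEquiv.trans_apply, hf.1, hf'.1]
    · intro l x y
      simp only [LinearEquiv.trans_apply, hf.2, hf'.2]
    · intro a
      simp only [LinearEquiv.trans_apply, hfA, hf'A]
    · intro b
      have h1 : f (0, b) = ((f (0, b)).1, h b) := Prod.ext rfl (hfB b)
      have h2 : ((f (0, b)).1, h b) = (((f (0, b)).1, 0) : A × B) + ((0 : A), h b) := by simp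
      rw [LinearEquiv.trans_apply, h1, h2, map_add, hf'A]
      have := hf'B (h b)
      simp [this]
end
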